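/- Let n ≥ 2 and let φ₁, …, φₙ be satisfiable propositional formulas such that φ_i ∧ φ_j is unsatisfiable for all i ≠ j, and let φ = φ₁ ∧ (φ₁ S (φ₂ S (… S (φ_{n−1} S φₙ)…))) ∧ ((…((φ₁ S φ₂) S φ₃) S …) S φₙ). Then every structure S that satisfies φ at a state s_m admits natural numbers 0 = a₀ < a₁ < … < aₙ ≤ m+1 such that for every i ∈ {1,…,n} and every j with m − a_i < j ≤ m − a_{i−1}, the structure S satisfies φ_i at state s_j. -/

import Mathlib

inductive TFormula (V : Type) : Type
  | var : V → TFormula V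
  | app : (n : ℕ) → ((Fin n → Bool) → Bool) → (Fin n → TFormula V) → TFormula V
  | X : TFormula V → TFormula V
  | F : TFormula V → TFormula V
  | G : TFormula V → TFormula V
  | U : TFormula V → TFormula V → TFormula V
  | S : TFormula V → TFormula V → TFormula V

def Sat {V : Type} (ξ : ℕ → V → Bool) : ℕ → TFormula V → Prop
  | i, TFormula.var x => ξ i x = true
  | i, TFormula.app n f args =>
      ∃ b : Fin n → Bool, (∀ k, (b k = true ↔ Sat ξ i (args k))) ∧ f b = true
  | i, TFormula.X φ => Sat ξ (i + 1) φ
  | i, TFormula.F φ => ∃ k, i ≤ k ∧ Sat ξ k φ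
  | i, TFormula.G φ => ∀ k, i ≤ k → Sat ξ k φ
  | i, TFormula.U φ ψ => ∃ k, i ≤ k ∧ Sat ξ k ψ ∧ ∀ j, i ≤ j → j < k → Sat ξ j φ
  | i, TFormula.S φ ψ => ∃ k, k ≤ i ∧ Sat ξ k ψ ∧ ∀ j, k < j → j ≤ i → Sat ξ j φ

/-- A Boolean function of some arity `n`. -/
abbrev BFun : Type := Σ n : ℕ, (Fin n → Bool) → Bool

/-- All Boolean connectives occurring in the formula come from `B`. -/
def UsesFuns {V : Type} (B : Set BFun) : TFormula V → Prop
  | TFormula.var _ => True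
  | TFormula.app n f args => (⟨n, f⟩ : BFun) ∈ B ∧ ∀ k, UsesFuns B (args k)
  | TFormula.X φ => UsesFuns B φ
  | TFormula.F φ => UsesFuns B φ
  | TFormula.G φ => UsesFuns B φ
  | TFormula.U φ ψ => UsesFuns B φ ∧ UsesFuns B ψ
  | TFormula.S φ ψ => UsesFuns B φ ∧ UsesFuns B ψ

/-- Conjunction as the binary Boolean AND connective. -/
def TFormula.and {V : Type} (φ ψ : TFormula V) : TFormula V :=
  TFormula.app 2 (fun b => b 0 && b 1) ![φ, ψ]

/-- Disjunction as the binary Boolean OR connective. -/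
def TFormula.or {V : Type} (φ ψ : TFormula V) : TFormula V :=
  TFormula.app 2 (fun b => b 0 || b 1) ![φ, ψ]

/-- Negation as the unary Boolean NOT connective. -/
def TFormula.neg {V : Type} (φ : TFormula V) : TFormula V :=
  TFormula.app 1 (fun b => ! b 0) ![φ]

/-- The propositional constant 1 (true), a 0-ary connective. -/
def TFormula.tt {V : Type} : TFormula V := TFormula.app 0 (fun _ => true) ![]

/-- The propositional constant 0 (false), a 0-ary connective. -/
def TFormula.ff {V : Type} : TFormula V := TFormula.app 0 (fun _ => false) ![]

/-- Propositional formula: no temporal operators. -/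
def IsProp {V : Type} : TFormula V → Prop
  | TFormula.var _ => True
  | TFormula.app _ _ args => ∀ k, IsProp (args k)
  | TFormula.X _ => False
  | TFormula.F _ => False
  | TFormula.G _ => False
  | TFormula.U _ _ => False
  | TFormula.S _ _ => False

/-- The temporal operator S does not occur. -/
def NoS {V : Type} : TFormula V → Prop
  | TFormula.var _ => True
  | TFormula.app _ _ args => ∀ k, NoS (args k)
  | TFormula.X φ => NoS φ
  | TFormula.F φ => NoS φ
  | TFormula.G φ => NoS φ
  | TFormula.U φ ψ => NoS φ ∧ NoS ψ
  | TFormula.S _ _ => False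

/-- The only temporal operator occurring is S. -/
def OnlyS {V : Type} : TFormula V → Prop
  | TFormula.var _ => True
  | TFormula.app _ _ args => ∀ k, OnlyS (args k)
  | TFormula.X _ => False
  | TFormula.F _ => False
  | TFormula.G _ => False
  | TFormula.U _ _ => False
  | TFormula.S φ ψ => OnlyS φ ∧ OnlyS ψ

/-- The only temporal operator occurring is X. -/
def OnlyX {V : Type} : TFormula V → Prop
  | TFormula.var _ => True
  | TFormula.app _ _ args => ∀ k, OnlyX (args k)
  | TFormula.X φ => OnlyX φ
  | TFormula.F _ => False
  | TFormula.G _ => False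
  | TFormula.U _ _ => False
  | TFormula.S _ _ => False

/-- Maximal nesting degree of the operator X. -/
def xdepth {V : Type} : TFormula V → ℕ
  | TFormula.var _ => 0
  | TFormula.app _ _ args => Finset.univ.sup fun k => xdepth (args k)
  | TFormula.X φ => xdepth φ + 1
  | TFormula.F φ => xdepth φ
  | TFormula.G φ => xdepth φ
  | TFormula.U φ ψ => max (xdepth φ) (xdepth ψ)
  | TFormula.S φ ψ => max (xdepth φ) (xdepth ψ)

/-- `rightTower φ i m` is the right-nested Since-tower
`φ i S (φ (i+1) S (… S φ (i+m) …))`. -/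
def rightTower {V : Type} (φ : ℕ → TFormula V) : ℕ → ℕ → TFormula V
  | i, 0 => φ i
  | i, m + 1 => TFormula.S (φ i) (rightTower φ (i + 1) m)

/-- `leftTower φ i m` is the left-nested Since-tower
`(…((φ i S φ (i+1)) S φ (i+2)) S …) S φ (i+m)`. -/
def leftTower {V : Type} (φ : ℕ → TFormula V) (i : ℕ) : ℕ → TFormula V
  | 0 => φ i
  | m + 1 => TFormula.S (leftTower φ i m) (φ (i + m + 1))


variable {V : Type}

lemma sat_S (ξ : ℕ → V → Bool) (α β : TFormula V) (i : ℕ) :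
    Sat ξ i (TFormula.S α β) ↔ ∃ k, k ≤ i ∧ Sat ξ k β ∧ ∀ j, k < j → j ≤ i → Sat ξ j α :=
  Iff.rfl

lemma sat_and (ξ : ℕ → V → Bool) (φ ψ : TFormula V) (i : ℕ) :
    Sat ξ i (φ.and ψ) ↔ Sat ξ i φ ∧ Sat ξ i ψ := by
  constructor
  · rintro ⟨b, hb, hf⟩
    have h0 := (hb 0).1
    have h1 := (hb 1).1
    simp at h0 h1 hf
    exact ⟨h0 hf.1, h1 hf.2⟩
  · rintro ⟨h1, h2⟩
    refine ⟨![true, true], ?_, rfl⟩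
    intro k
    fin_cases k <;> simp [h1, h2]

lemma chain_mono (k : ℕ → ℕ) (R : ℕ) (h : ∀ s, s < R → k (s + 1) ≤ k s) :
    ∀ a b, a ≤ b → b ≤ R → k b ≤ k a := by
  intro a b hab hbR
  induction b with
  | zero =>
    have ha : a = 0 := by omega
    simp [ha]
  | succ b ihb =>
    rcases Nat.eq_or_lt_of_le hab with h1 | h1
    · rw [h1]
    · exact le_trans (h b (by omega)) (ihb (by omega) (by omega))

lemma chain_block (k : ℕ → ℕ) : ∀ (R : ℕ), (∀ s, s < R → k (s + 1) ≤ k s) →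
    ∀ j, k R < j → j ≤ k 0 → ∃ s, s < R ∧ k (s + 1) < j ∧ j ≤ k s := by
  intro R
  induction R with
  | zero => intro _ j h1 h2; omega
  | succ R ih =>
    intro h j h1 h2
    by_cases hc : k R < j
    · obtain ⟨s, hs, h3, h4⟩ := ih (fun s hs => h s (by omega)) j hc h2
      exact ⟨s, by omega, h3, h4⟩
    · exact ⟨R, by omega, h1, by omega⟩

lemma zchain_mono (c : ℕ → ℤ) (R : ℕ) (h : ∀ i, i ≤ R → c (i + 1) < c i) :
    ∀ a b, a ≤ b → b ≤ R + 1 → c b ≤ c a := by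
  intro a b hab hbR
  induction b with
  | zero =>
    have ha : a = 0 := by omega
    simp [ha]
  | succ b ihb =>
    rcases Nat.eq_or_lt_of_le hab with h1 | h1
    · rw [h1]
    · exact le_trans (le_of_lt (h b (by omega))) (ihb (by omega) (by omega))

lemma zchain_block (c : ℕ → ℤ) : ∀ (R : ℕ), (∀ i, i ≤ R → c (i + 1) < c i) →
    ∀ j : ℤ, c (R + 1) < j → j ≤ c 0 → ∃ i, 1 ≤ i ∧ i ≤ R + 1 ∧ c i < j ∧ j ≤ c (i - 1) := by
  intro R
  induction R with
  | zero => intro _ j h1 h2; exact ⟨1, le_rfl, le_rfl, h1, h2⟩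
  | succ R ih =>
    intro h j h1 h2
    by_cases hc : c (R + 1) < j
    · obtain ⟨i, hi1, hi2, h3, h4⟩ := ih (fun i hi => h i (by omega)) j hc h2
      exact ⟨i, hi1, by omega, h3, h4⟩
    · exact ⟨R + 2, by omega, le_rfl, h1, by push_neg at hc; simpa using hc⟩

lemma rt_unfold (ξ : ℕ → V → Bool) (φ : ℕ → TFormula V) :
    ∀ (r i t : ℕ), Sat ξ t (rightTower φ i r) →
      ∃ k : ℕ → ℕ, k 0 = t ∧ (∀ s, s < r → k (s + 1) ≤ k s) ∧
        Sat ξ (k r) (φ (i + r)) ∧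
        (∀ s, s < r → ∀ j, k (s + 1) < j → j ≤ k s → Sat ξ j (φ (i + s))) := by
  intro r
  induction r with
  | zero =>
    intro i t h
    exact ⟨fun _ => t, rfl, by omega, by simpa [rightTower] using h, by omega⟩
  | succ r ih =>
    intro i t h
    rw [rightTower, sat_S] at h
    obtain ⟨k1, hk1, hb, hblk⟩ := h
    obtain ⟨k', hk'0, hk'm, hk'b, hk'blk⟩ := ih (i + 1) k1 hb
    refine ⟨fun s => match s with | 0 => t | s + 1 => k' s, rfl, ?_, ?_, ?_⟩
    · intro s hs
      match s with
      | 0 => simpa [hk'0] using hk1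
      | s + 1 => exact hk'm s (by omega)
    · show Sat ξ (k' r) (φ (i + (r + 1)))
      have : i + 1 + r = i + (r + 1) := by omega
      rwa [this] at hk'b
    · intro s hs j hj1 hj2
      match s with
      | 0 =>
        simp only at hj1 hj2
        simpa using hblk j (by rwa [hk'0] at hj1) hj2
      | s + 1 =>
        have : i + (s + 1) = i + 1 + s := by omega
        rw [this]
        exact hk'blk s (by omega) j hj1 hj2

lemma rt_build (ξ : ℕ → V → Bool) (φ : ℕ → TFormula V) :
    ∀ (r i t : ℕ) (k : ℕ → ℕ), k 0 = t → (∀ s, s < r → k (s + 1) ≤ k s) →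
      Sat ξ (k r) (φ (i + r)) →
      (∀ s, s < r → ∀ j, k (s + 1) < j → j ≤ k s → Sat ξ j (φ (i + s))) →
      Sat ξ t (rightTower φ i r) := by
  intro r
  induction r with
  | zero =>
    intro i t k hk0 _ hb _
    rw [rightTower]
    rw [hk0] at hb
    simpa using hb
  | succ r ih =>
    intro i t k hk0 hm hb hblk
    rw [rightTower, sat_S]
    refine ⟨k 1, by rw [← hk0]; exact hm 0 (by omega), ?_, ?_⟩
    · refine ih (i + 1) (k 1) (fun s => k (s + 1)) rfl (fun s hs => hm (s + 1) (by omega)) ?_ ?_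
      · have : i + 1 + r = i + (r + 1) := by omega
        rw [this]; exact hb
      · intro s hs j h1 h2
        have : i + 1 + s = i + (s + 1) := by omega
        rw [this]
        exact hblk (s + 1) (by omega) j h1 h2
    · intro j h1 h2
      rw [← hk0] at h2
      simpa using hblk 0 (by omega) j h1 h2

lemma lt_color (ξ : ℕ → V → Bool) (φ : ℕ → TFormula V) :
    ∀ (r t : ℕ), Sat ξ t (leftTower φ 1 r) →
      ∃ u, u ≤ t ∧ Sat ξ u (φ (r + 1)) ∧
        ∀ p, u < p → p ≤ t → ∃ s, 1 ≤ s ∧ s ≤ r ∧ Sat ξ p (φ s) := by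
  intro r
  induction r with
  | zero =>
    intro t h
    exact ⟨t, le_rfl, by simpa [leftTower] using h, by omega⟩
  | succ r ih =>
    intro t h
    rw [leftTower, sat_S] at h
    obtain ⟨u, hu, hub, hblk⟩ := h
    refine ⟨u, hu, ?_, ?_⟩
    · have : 1 + r + 1 = r + 1 + 1 := by omega
      rwa [this] at hub
    · intro p h1 h2
      obtain ⟨w, hw, hwb, hwc⟩ := ih p (hblk p h1 h2)
      rcases Nat.eq_or_lt_of_le hw with he | he
      · exact ⟨r + 1, by omega, by omega, by rwa [he] at hwb⟩
      · obtain ⟨s, hs1, hs2, hs3⟩ := hwc p he le_rfl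
        exact ⟨s, hs1, by omega, hs3⟩

lemma mainT (ξ : ℕ → V → Bool) (φ : ℕ → TFormula V) (n : ℕ)
    (hC : ∀ i j s, 1 ≤ i → i ≤ n → 1 ≤ j → j ≤ n → i ≠ j →
      Sat ξ s (φ i) → Sat ξ s (φ j) → False) :
    ∀ r, r + 1 ≤ n → ∀ t, Sat ξ t (φ 1) →
      Sat ξ t (rightTower φ 1 r) → Sat ξ t (leftTower φ 1 r) →
      ∃ c : ℕ → ℤ, c 0 = (t : ℤ) ∧ (∀ i, i ≤ r → c (i + 1) < c i) ∧ (-1 ≤ c (r + 1)) ∧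
        ∀ i, 1 ≤ i → i ≤ r + 1 → ∀ j : ℕ, c i < (j : ℤ) → (j : ℤ) ≤ c (i - 1) →
          Sat ξ j (φ i) := by
  intro r
  induction r with
  | zero =>
    intro _ t h1 _ _
    refine ⟨fun i => if i = 0 then (t : ℤ) else (t : ℤ) - 1, by simp, ?_, by simp; omega, ?_⟩
    · intro i hi
      have : i = 0 := by omega
      simp [this]
    · intro i hi1 hi2 j hj1 hj2
      have hi : i = 1 := by omega
      subst hi
      simp only [if_neg (by omega : (1:ℕ) ≠ 0), if_pos rfl] at hj1 hj2
      have : j = t := by omega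
      rwa [this]
  | succ r ih =>
    intro hrn t h1 hR hL
    obtain ⟨k, hk0, hkm, hkb, hkblk⟩ := rt_unfold ξ φ (r + 1) 1 t hR
    have hkb' : Sat ξ (k (r + 1)) (φ (r + 2)) := by
      have : 1 + (r + 1) = r + 2 := by omega
      rwa [this] at hkb
    rw [leftTower, sat_S] at hL
    obtain ⟨u, hut, hub, hlblk⟩ := hL
    have hφu : Sat ξ u (φ (r + 2)) := by
      have : 1 + r + 1 = r + 2 := by omega
      rwa [this] at hub
    -- u = k (r+1)
    have hukr : u = k (r + 1) := by
      rcases lt_trichotomy u (k (r + 1)) with h | h | h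
      · exfalso
        have hkt : k (r + 1) ≤ t := by
          rw [← hk0]; exact chain_mono k (r + 1) hkm 0 (r + 1) (by omega) le_rfl
        have hl := hlblk (k (r + 1)) h hkt
        obtain ⟨w, hw, hwb, hwc⟩ := lt_color ξ φ r (k (r + 1)) hl
        rcases Nat.eq_or_lt_of_le hw with he | he
        · exact hC (r + 1) (r + 2) (k (r + 1)) (by omega) (by omega) (by omega) (by omega)
            (by omega) (by rwa [he] at hwb) hkb'
        · obtain ⟨s, hs1, hs2, hs3⟩ := hwc (k (r + 1)) he le_rfl
          exact hC s (r + 2) (k (r + 1)) hs1 (by omega) (by omega) (by omega) (by omega) hs3 hkb'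
      · exact h
      · exfalso
        obtain ⟨s, hs, h3, h4⟩ := chain_block k (r + 1) hkm u h (by rwa [hk0])
        exact hC (1 + s) (r + 2) u (by omega) (by omega) (by omega) (by omega) (by omega)
          (hkblk s hs u h3 h4) hφu
    -- u < t
    have hult : u < t := by
      rcases Nat.eq_or_lt_of_le hut with he | he
      · exact absurd (hC 1 (r + 2) t (by omega) (by omega) (by omega) (by omega) (by omega)
          h1 (by rwa [he] at hφu)) (by simp)
      · exact he
    -- φ (r+1) at u+1
    have hu1 : Sat ξ (u + 1) (φ (r + 1)) := by
      obtain ⟨w, hw, hwb, hwc⟩ := lt_color ξ φ r (u + 1) (hlblk (u + 1) (by omega) (by omega))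
      rcases Nat.eq_or_lt_of_le hw with he | he
      · rwa [he] at hwb
      · exfalso
        rcases Nat.eq_or_lt_of_le (Nat.lt_succ_iff.mp he) with he2 | he2
        · exact hC (r + 1) (r + 2) u (by omega) (by omega) (by omega) (by omega) (by omega)
            (by rwa [he2] at hwb) hφu
        · obtain ⟨s, hs1, hs2, hs3⟩ := hwc u he2 (by omega)
          exact hC s (r + 2) u hs1 (by omega) (by omega) (by omega) (by omega) hs3 hφu
    -- k r > u
    have hkru : u < k r := by
      obtain ⟨s, hs, h3, h4⟩ := chain_block k (r + 1) hkm (u + 1) (by omega) (by rw [hk0]; omega)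
      have hss : 1 + s = r + 1 := by
        by_contra hne
        exact hC (1 + s) (r + 1) (u + 1) (by omega) (by omega) (by omega) (by omega) hne
          (hkblk s hs (u + 1) h3 h4) hu1
      have hsr : s = r := by omega
      subst hsr
      omega
    -- rightTower φ 1 r at t
    have hRr : Sat ξ t (rightTower φ 1 r) := by
      refine rt_build ξ φ r 1 t k hk0 (fun s hs => hkm s (by omega)) ?_
        (fun s hs => hkblk s (by omega))
      exact hkblk r (by omega) (k r) (by omega) le_rfl
    have hLr : Sat ξ t (leftTower φ 1 r) := hlblk t hult le_rfl
    obtain ⟨c, hc0, hcs, hcb, hcblk⟩ := ih (by omega) t h1 hRr hLr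
    have cmono := zchain_mono c r hcs
    -- u ≤ c (r+1)
    have hcu : (u : ℤ) ≤ c (r + 1) := by
      by_contra hcon
      push_neg at hcon
      obtain ⟨i, hi1, hi2, h3, h4⟩ := zchain_block c r hcs u hcon
        (by rw [hc0]; exact_mod_cast hut)
      exact hC i (r + 2) u hi1 (by omega) (by omega) (by omega) (by omega)
        (hcblk i hi1 hi2 u h3 h4) hφu
    -- c (r+1) + 1 ≤ k r
    have hckr : c (r + 1) + 1 ≤ (k r : ℤ) := by
      set p : ℕ := (c (r + 1) + 1).toNat with hp
      have hpz : (p : ℤ) = c (r + 1) + 1 := by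
        rw [hp]; rw [Int.toNat_of_nonneg (by omega)]
      have hpsat : Sat ξ p (φ (r + 1)) := by
        refine hcblk (r + 1) (by omega) le_rfl p (by omega) ?_
        simp only [Nat.add_sub_cancel]
        have := hcs r le_rfl
        omega
      have hpt : p ≤ t := by
        have h1' : c (r + 1) < c 0 := by
          calc c (r + 1) < c r := hcs r le_rfl
          _ ≤ c 0 := cmono 0 r (by omega) (by omega)
        rw [hc0] at h1'
        omega
      obtain ⟨s, hs, h3, h4⟩ := chain_block k (r + 1) hkm p (by omega) (by rw [hk0]; exact hpt)
      have hss : 1 + s = r + 1 := by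
        by_contra hne
        exact hC (1 + s) (r + 1) p (by omega) (by omega) (by omega) (by omega) hne
          (hkblk s hs p h3 h4) hpsat
      have hsr : s = r := by omega
      subst hsr
      omega
    -- final chain
    have hucr : (u : ℤ) < c r := lt_of_le_of_lt hcu (hcs r le_rfl)
    set c' : ℕ → ℤ := fun i => if i ≤ r then c i else if i = r + 1 then (u : ℤ) else (u : ℤ) - 1
      with hc'def
    have hce : ∀ i, c' i = if i ≤ r then c i else if i = r + 1 then (u : ℤ) else (u : ℤ) - 1 :=
      fun i => rfl
    refine ⟨c', by rw [hce 0, if_pos (Nat.zero_le r)]; exact hc0, ?_, ?_, ?_⟩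
    · intro i hi
      rw [hce (i + 1), hce i]
      by_cases h1' : i + 1 ≤ r
      · rw [if_pos h1', if_pos (by omega : i ≤ r)]
        exact hcs i (by omega)
      · by_cases h2' : i ≤ r
        · rw [if_neg h1', if_pos h2', if_pos (by omega : i + 1 = r + 1)]
          have hir : i = r := by omega
          rw [hir]
          exact hucr
        · rw [if_neg h1', if_neg h2', if_neg (by omega : ¬ i + 1 = r + 1),
            if_pos (by omega : i = r + 1)]
          omega
    · rw [hce (r + 1 + 1), if_neg (by omega), if_neg (by omega)]
      omega
    · intro i hi1 hi2 j hj1 hj2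
      rw [hce i] at hj1
      rw [hce (i - 1)] at hj2
      by_cases h1' : i ≤ r
      · rw [if_pos h1'] at hj1
        rw [if_pos (by omega : i - 1 ≤ r)] at hj2
        exact hcblk i hi1 (by omega) j hj1 hj2
      · by_cases h2' : i = r + 1
        · subst h2'
          rw [if_neg h1', if_pos rfl] at hj1
          rw [Nat.add_sub_cancel, if_pos le_rfl] at hj2
          by_cases h3' : c (r + 1) < (j : ℤ)
          · exact hcblk (r + 1) (by omega) le_rfl j h3' (by simpa using hj2)
          · push_neg at h3'
            have hjkr : j ≤ k r := by omega
            have hjk1 : k (r + 1) < j := by omega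
            have hres := hkblk r (by omega) j hjk1 hjkr
            have hr1 : 1 + r = r + 1 := by omega
            rwa [hr1] at hres
        · have hi : i = r + 2 := by omega
          subst hi
          rw [if_neg (by omega : ¬ r + 2 ≤ r), if_neg (by omega : ¬ r + 2 = r + 1)] at hj1
          rw [show r + 2 - 1 = r + 1 from by omega, if_neg (by omega : ¬ r + 1 ≤ r),
            if_pos rfl] at hj2
          have hju : j = u := by omega
          rwa [hju]
/-- For `n ≥ 2` and satisfiable, pairwise contradictory propositional
formulas `φ 1, …, φ n`, every structure satisfying
`φ 1 ∧ (φ 1 S (φ 2 S (… S φ n …))) ∧ ((…(φ 1 S φ 2) S …) S φ n)` at state `s m`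
admits `0 = a 0 < a 1 < … < a n ≤ m + 1` with: `m - a i < j ≤ m - a (i-1)` implies
`φ i` holds at `s j`. -/
theorem stmt5 {V : Type} (n : ℕ) (hn : 2 ≤ n) (φ : ℕ → TFormula V)
    (hprop : ∀ i, 1 ≤ i → i ≤ n → IsProp (φ i))
    (hsat : ∀ i, 1 ≤ i → i ≤ n → ∃ (ξ : ℕ → V → Bool) (m : ℕ), Sat ξ m (φ i))
    (hcontra : ∀ i j, 1 ≤ i → i ≤ n → 1 ≤ j → j ≤ n → i ≠ j →
      ¬ ∃ (ξ : ℕ → V → Bool) (m : ℕ), Sat ξ m ((φ i).and (φ j)))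
    (ξ : ℕ → V → Bool) (m : ℕ)
    (hSat : Sat ξ m ((φ 1).and ((rightTower φ 1 (n - 1)).and (leftTower φ 1 (n - 1))))) :
    ∃ a : ℕ → ℕ, a 0 = 0 ∧ (∀ i, i < n → a i < a (i + 1)) ∧ a n ≤ m + 1 ∧
      ∀ i, 1 ≤ i → i ≤ n → ∀ j : ℕ,
        (m : ℤ) - (a i : ℤ) < (j : ℤ) → (j : ℤ) ≤ (m : ℤ) - (a (i - 1) : ℤ) →
        Sat ξ j (φ i) := by
  have hC : ∀ i j s, 1 ≤ i → i ≤ n → 1 ≤ j → j ≤ n → i ≠ j →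
      Sat ξ s (φ i) → Sat ξ s (φ j) → False := by
    intro i j s hi1 hi2 hj1 hj2 hij hsi hsj
    exact hcontra i j hi1 hi2 hj1 hj2 hij ⟨ξ, s, (sat_and ξ (φ i) (φ j) s).2 ⟨hsi, hsj⟩⟩
  rw [sat_and] at hSat
  obtain ⟨h1, hRL⟩ := hSat
  rw [sat_and] at hRL
  obtain ⟨hR, hL⟩ := hRL
  obtain ⟨c, hc0, hcs, hcb, hcblk⟩ := mainT ξ φ n hC (n - 1) (by omega) m h1 hR hL
  have hn1 : n - 1 + 1 = n := by omega
  rw [hn1] at hcb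
  have cmono := zchain_mono c (n - 1) hcs
  have hcm : ∀ i, i ≤ n → c i ≤ (m : ℤ) := by
    intro i hi
    rw [← hc0]
    exact cmono 0 i (by omega) (by omega)
  have hcn : ∀ i, i ≤ n → -1 ≤ c i := by
    intro i hi
    exact le_trans hcb (cmono i n hi (by omega))
  set a : ℕ → ℕ := fun i => ((m : ℤ) - c i).toNat with hadef
  have hae : ∀ i, a i = ((m : ℤ) - c i).toNat := fun _ => rfl
  refine ⟨a, ?_, ?_, ?_, ?_⟩
  · rw [hae 0, hc0]
    simp
  · intro i hi
    rw [hae i, hae (i + 1)]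
    have h1' := hcs i (by omega)
    have h2' := hcm i (by omega)
    have h3' := hcn (i + 1) (by omega)
    omega
  · rw [hae n]
    have := hcn n le_rfl
    have := hcm n le_rfl
    omega
  · intro i hi1 hi2 j hj1 hj2
    rw [hae i] at hj1
    rw [hae (i - 1)] at hj2
    have h2' := hcm i (by omega)
    have h3' := hcn i (by omega)
    have h4' := hcm (i - 1) (by omega)
    have h5' := hcn (i - 1) (by omega)
    refine hcblk i hi1 (by omega) j ?_ ?_ <;> omega
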